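/- Let p > 0, let a, c ∈ ℝᵐ with c ≠ 0, and let F_V, F_h ∈ ℝ satisfy F_h ≤ 0 and ‖c‖²F_V − ⟨a, c⟩F_h < 0. Then the pair (u*, δ*) with u* = −‖c‖⁻² F_h · c and δ* = 0 is the unique minimizer of the strictly convex function (u, δ) ↦ ½(‖u‖² + pδ²) over the set {(u, δ) ∈ ℝᵐ × ℝ : ⟨a, u⟩ ≤ −F_V + δ and ⟨c, u⟩ ≥ −F_h}. -/

import Mathlib

open scoped RealInnerProductSpace

set_option maxHeartbeats 1000000

/-- closed-form KKT solution of the relaxed CLF-CBF QP when only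
the CBF constraint is active: under `F_h ≤ 0` and `s₂ = ‖c‖²F_V - ⟪a,c⟫F_h < 0`,
the pair `u* = -‖c‖⁻² F_h c`, `δ* = 0` is the unique minimizer of
`½(‖u‖² + pδ²)` over `{(u,δ) : ⟪a,u⟫ ≤ -F_V + δ ∧ ⟪c,u⟫ ≥ -F_h}`. -/
theorem stmt_14 {m : ℕ}
    (p : ℝ) (hp : 0 < p)
    (a c : EuclideanSpace ℝ (Fin m)) (hc : c ≠ 0)
    (FV Fh : ℝ) (hFh : Fh ≤ 0)
    (hs2 : ‖c‖ ^ 2 * FV - ⟪a, c⟫ * Fh < 0) :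
    let uStar : EuclideanSpace ℝ (Fin m) := -((‖c‖ ^ 2)⁻¹ * Fh) • c
    let δStar : ℝ := 0
    (⟪a, uStar⟫ ≤ -FV + δStar ∧ ⟪c, uStar⟫ ≥ -Fh) ∧
    ∀ (u : EuclideanSpace ℝ (Fin m)) (δ : ℝ),
      ⟪a, u⟫ ≤ -FV + δ → ⟪c, u⟫ ≥ -Fh →
      (1 : ℝ) / 2 * (‖uStar‖ ^ 2 + p * δStar ^ 2) ≤
        (1 : ℝ) / 2 * (‖u‖ ^ 2 + p * δ ^ 2) ∧
      ((u, δ) ≠ (uStar, δStar) →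
        (1 : ℝ) / 2 * (‖uStar‖ ^ 2 + p * δStar ^ 2) <
          (1 : ℝ) / 2 * (‖u‖ ^ 2 + p * δ ^ 2)) := by
  intro uStar δStar
  have hcn : (0:ℝ) < ‖c‖ := norm_pos_iff.mpr hc
  have hc2 : (0:ℝ) < ‖c‖ ^ 2 := by positivity
  have hcu : ⟪c, uStar⟫ = -Fh := by
    show ⟪c, -((‖c‖ ^ 2)⁻¹ * Fh) • c⟫ = -Fh
    rw [real_inner_smul_right, real_inner_self_eq_norm_sq]
    field_simp
  have hau : ⟪a, uStar⟫ = -((‖c‖ ^ 2)⁻¹ * Fh) * ⟪a, c⟫ := by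
    show ⟪a, -((‖c‖ ^ 2)⁻¹ * Fh) • c⟫ = _
    rw [real_inner_smul_right]
  have hnorm_uStar : ‖uStar‖ = |(‖c‖ ^ 2)⁻¹ * Fh| * ‖c‖ := by
    show ‖(-((‖c‖ ^ 2)⁻¹ * Fh)) • c‖ = _
    rw [norm_smul, Real.norm_eq_abs, abs_neg]
  have hnormu : ‖uStar‖ ^ 2 = Fh ^ 2 / ‖c‖ ^ 2 := by
    rw [hnorm_uStar, mul_pow, sq_abs]
    field_simp
  have hfeas1 : ⟪a, uStar⟫ ≤ -FV + δStar := by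
    rw [hau]
    have key : FV ≤ (‖c‖ ^ 2)⁻¹ * (⟪a, c⟫ * Fh) := by
      rw [le_inv_mul_iff₀ hc2]; linarith
    show -((‖c‖ ^ 2)⁻¹ * Fh) * ⟪a, c⟫ ≤ -FV + 0
    nlinarith [key]
  refine ⟨⟨hfeas1, by rw [ge_iff_le, hcu]⟩, ?_⟩
  intro u δ hu1 hu2
  have hcs : ⟪c, u⟫ ≤ ‖c‖ * ‖u‖ := real_inner_le_norm c u
  have h3 : -Fh ≤ ‖c‖ * ‖u‖ := le_trans hu2 hcs
  have hsq : Fh ^ 2 ≤ ‖c‖ ^ 2 * ‖u‖ ^ 2 := by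
    nlinarith [norm_nonneg u, hFh]
  have hle2 : ‖uStar‖ ^ 2 ≤ ‖u‖ ^ 2 := by
    rw [hnormu, div_le_iff₀ hc2]; nlinarith
  constructor
  · show (1:ℝ)/2 * (‖uStar‖ ^ 2 + p * (0:ℝ) ^ 2) ≤ _
    nlinarith [sq_nonneg δ, hp.le]
  · intro hne
    by_cases hδ : δ = 0
    · subst hδ
      have hune : u ≠ uStar := by
        intro h; exact hne (by simp [h, δStar])
      have hlt : ‖uStar‖ ^ 2 < ‖u‖ ^ 2 := by
        rcases lt_or_eq_of_le hle2 with h | h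
        · exact h
        · exfalso
          have hnorm : ‖u‖ = ‖uStar‖ := by
            nlinarith [norm_nonneg u, norm_nonneg uStar]
          have hnu : ‖u‖ = -Fh / ‖c‖ := by
            rw [hnorm]
            have h5 : ‖uStar‖ ^ 2 = (-Fh / ‖c‖) ^ 2 := by
              rw [hnormu]; field_simp
            have hpos : (0:ℝ) ≤ -Fh / ‖c‖ := div_nonneg (by linarith) hcn.le
            nlinarith [norm_nonneg uStar]
          have heq : ⟪c, u⟫ = ‖c‖ * ‖u‖ := by
            have h6 : ‖c‖ * ‖u‖ = -Fh := by
              rw [hnu]; field_simp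
            linarith [hu2, hcs]
          have h7 : ‖u‖ • c = ‖c‖ • u :=
            (inner_eq_norm_mul_iff_real (x := c) (y := u)).mp heq
          have hu_eq : u = (‖u‖ / ‖c‖) • c := by
            have h4 : (‖c‖)⁻¹ • (‖u‖ • c) = (‖c‖)⁻¹ • (‖c‖ • u) := by rw [h7]
            rw [smul_smul, smul_smul, inv_mul_cancel₀ hcn.ne', one_smul] at h4
            rw [div_eq_mul_inv, mul_comm]; exact h4.symm
          apply hune
          rw [hu_eq]
          have h8 : ‖u‖ / ‖c‖ = -((‖c‖ ^ 2)⁻¹ * Fh) := by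
            rw [hnu, div_div, show ‖c‖ * ‖c‖ = ‖c‖ ^ 2 from by ring,
              neg_div, div_eq_inv_mul]
          rw [h8]
      show _ < (1:ℝ)/2 * (‖u‖ ^ 2 + p * (0:ℝ) ^ 2)
      show (1:ℝ)/2 * (‖uStar‖ ^ 2 + p * (0:ℝ) ^ 2) < _
      nlinarith
    · have hpd : 0 < p * δ ^ 2 := mul_pos hp (by positivity)
      show (1:ℝ)/2 * (‖uStar‖ ^ 2 + p * (0:ℝ) ^ 2) < _
      nlinarith
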